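/- The matrix (Id^R)^Σ is an annihilator for distance multiplication of simple unit-Monge matrices: for every n×n permutation matrix P, P^Σ ⊙ (Id^R)^Σ = (Id^R)^Σ ⊙ P^Σ = (Id^R)^Σ, where Id^R is the reverse identity permutation matrix (Id^R(î,ĵ) = 1 iff î+ĵ = n). -/
import Mathlib


def PermMat {n : ℕ} (σ : Equiv.Perm (Fin n)) : Fin n → Fin n → ℤ :=
  fun i j => if σ i = j then 1 else 0

def distSum {m n : ℕ} (D : Fin m → Fin n → ℤ) (i : Fin (m+1)) (j : Fin (n+1)) : ℤ :=
  ∑ p : Fin m, ∑ q : Fin n, if (i : ℕ) ≤ (p : ℕ) ∧ (q : ℕ) < (j : ℕ) then D p q else 0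

def distProd {n : ℕ} (A B : Fin (n+1) → Fin (n+1) → ℤ) (i k : Fin (n+1)) : ℤ :=
  Finset.univ.inf' Finset.univ_nonempty (fun j => A i j + B j k)

/-- The reverse identity permutation matrix: nonzeros exactly where the
half-integer indices `î + ĵ = n`, i.e. on indices `p + q = n − 1`. -/
def IdR (n : ℕ) : Fin n → Fin n → ℤ :=
  fun i j => if (i : ℕ) + (j : ℕ) = n - 1 then 1 else 0

/- auxiliary lemmas -/

lemma count_lt (n m : ℕ) (h : m ≤ n) :
    ∑ p : Fin n, (if (p : ℕ) < m then (1:ℤ) else 0) = m := by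
  rw [Fin.sum_univ_eq_sum_range (fun p => if p < m then (1:ℤ) else 0) n,
    ← Finset.sum_filter]
  have : (Finset.range n).filter (· < m) = Finset.range m := by
    ext x; simp; omega
  rw [this]
  simp

lemma permSum {n : ℕ} (σ : Equiv.Perm (Fin n)) (i j : Fin (n+1)) :
    distSum (PermMat σ) i j
      = ∑ p : Fin n, if (i : ℕ) ≤ (p : ℕ) ∧ ((σ p : ℕ)) < (j : ℕ) then (1:ℤ) else 0 := by
  unfold distSum PermMat
  refine Finset.sum_congr rfl fun p _ => ?_
  have h : ∀ q : Fin n,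
      (if (i : ℕ) ≤ (p : ℕ) ∧ (q : ℕ) < (j : ℕ) then (if σ p = q then (1:ℤ) else 0) else 0)
      = (if σ p = q then (if (i : ℕ) ≤ (p : ℕ) ∧ ((σ p : ℕ)) < (j : ℕ) then (1:ℤ) else 0) else 0) := by
    intro q
    by_cases hq : σ p = q
    · subst hq; simp
    · simp [hq]
  rw [Finset.sum_congr rfl fun q _ => h q, Finset.sum_ite_eq]
  simp

lemma idR_eq_permMat (n : ℕ) : IdR n = PermMat (Fin.revPerm (n := n)) := by
  funext i j
  unfold IdR PermMat
  congr 1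
  simp only [eq_iff_iff, Fin.revPerm_apply]
  constructor
  · intro h
    ext
    simp [Fin.val_rev]
    omega
  · intro h
    rw [← h]
    simp [Fin.val_rev]
    omega

lemma idRSum {n : ℕ} (i j : Fin (n+1)) :
    distSum (IdR n) i j = min ((n : ℤ) - (i : ℕ)) (j : ℕ) := by
  rw [idR_eq_permMat, permSum]
  obtain ⟨M, hM1, hM2, hM3⟩ : ∃ M : ℕ, ((i : ℕ) ≤ M ∧ n - (j : ℕ) ≤ M) ∧
      (M = (i : ℕ) ∨ M = n - (j : ℕ)) ∧ M = max (i : ℕ) (n - (j : ℕ)) :=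
    ⟨_, ⟨le_max_left _ _, le_max_right _ _⟩, (max_choice _ _), rfl⟩
  have hcond : ∀ p : Fin n,
      (if (i : ℕ) ≤ (p : ℕ) ∧ ((Fin.revPerm p : ℕ)) < (j : ℕ) then (1:ℤ) else 0)
      = (if (p : ℕ) < M then (0:ℤ) else 1) := by
    intro p
    have hp := p.isLt
    have hi := i.isLt
    have hj := j.isLt
    simp only [Fin.revPerm_apply, Fin.val_rev]
    by_cases h : (i : ℕ) ≤ (p : ℕ) ∧ n - ((p : ℕ) + 1) < (j : ℕ)
    · rw [if_pos h, if_neg]; omega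
    · rw [if_neg h, if_pos]; omega
  rw [Finset.sum_congr rfl fun p _ => hcond p]
  have hmn : M ≤ n := by
    have hi := Fin.is_le i
    rcases hM2 with h | h <;> omega
  have : ∑ p : Fin n, (if (p : ℕ) < M then (0:ℤ) else 1)
      = ∑ p : Fin n, ((1:ℤ) - if (p : ℕ) < M then (1:ℤ) else 0) := by
    refine Finset.sum_congr rfl fun p _ => ?_
    by_cases h : (p : ℕ) < M <;> simp [h]
  rw [this, Finset.sum_sub_distrib, count_lt n M hmn]
  simp only [Finset.sum_const, Finset.card_univ, Fintype.card_fin, nsmul_eq_mul, mul_one]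
  have hi := Fin.is_le i
  have hj := Fin.is_le j
  omega

lemma permSum_nonneg {n : ℕ} (σ : Equiv.Perm (Fin n)) (i j : Fin (n+1)) :
    0 ≤ distSum (PermMat σ) i j := by
  rw [permSum]
  refine Finset.sum_nonneg fun p _ => ?_
  by_cases h : (i : ℕ) ≤ (p : ℕ) ∧ ((σ p : ℕ)) < (j : ℕ) <;> simp [h]

lemma permSum_lb {n : ℕ} (σ : Equiv.Perm (Fin n)) (i j : Fin (n+1)) :
    (j : ℤ) - (i : ℕ) ≤ distSum (PermMat σ) i j := by
  rw [permSum]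
  have step : ∀ p : Fin n,
      (if ((σ p : ℕ)) < (j : ℕ) then (1:ℤ) else 0) - (if (p : ℕ) < (i : ℕ) then (1:ℤ) else 0)
      ≤ (if (i : ℕ) ≤ (p : ℕ) ∧ ((σ p : ℕ)) < (j : ℕ) then (1:ℤ) else 0) := by
    intro p
    by_cases h1 : ((σ p : ℕ)) < (j : ℕ) <;> by_cases h2 : (p : ℕ) < (i : ℕ) <;>
      simp [h1, h2] <;> omega
  calc (j : ℤ) - (i : ℕ)
      = ∑ p : Fin n, ((if ((σ p : ℕ)) < (j : ℕ) then (1:ℤ) else 0)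
          - (if (p : ℕ) < (i : ℕ) then (1:ℤ) else 0)) := by
        rw [Finset.sum_sub_distrib, count_lt n i (Fin.is_le i)]
        have := Equiv.sum_comp σ (fun q : Fin n => if (q : ℕ) < (j : ℕ) then (1:ℤ) else 0)
        rw [this, count_lt n j (Fin.is_le j)]
    _ ≤ _ := Finset.sum_le_sum fun p _ => step p

lemma permSum_zero_right {n : ℕ} (σ : Equiv.Perm (Fin n)) (i : Fin (n+1)) :
    distSum (PermMat σ) i 0 = 0 := by
  rw [permSum]; simp

lemma permSum_last_right {n : ℕ} (σ : Equiv.Perm (Fin n)) (i : Fin (n+1)) :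
    distSum (PermMat σ) i (Fin.last n) = (n : ℤ) - (i : ℕ) := by
  rw [permSum]
  have : ∀ p : Fin n,
      (if (i : ℕ) ≤ (p : ℕ) ∧ ((σ p : ℕ)) < ((Fin.last n : Fin (n+1)) : ℕ) then (1:ℤ) else 0)
      = ((1:ℤ) - if (p : ℕ) < (i : ℕ) then (1:ℤ) else 0) := by
    intro p
    have := (σ p).isLt
    by_cases h : (p : ℕ) < (i : ℕ) <;> simp [h, Fin.val_last]
  rw [Finset.sum_congr rfl fun p _ => this p, Finset.sum_sub_distrib,
    count_lt n i (Fin.is_le i)]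
  simp

lemma permSum_zero_left {n : ℕ} (σ : Equiv.Perm (Fin n)) (k : Fin (n+1)) :
    distSum (PermMat σ) 0 k = (k : ℕ) := by
  rw [permSum]
  have : ∀ p : Fin n,
      (if (((0 : Fin (n+1)) : ℕ)) ≤ (p : ℕ) ∧ ((σ p : ℕ)) < (k : ℕ) then (1:ℤ) else 0)
      = (if ((σ p : ℕ)) < (k : ℕ) then (1:ℤ) else 0) := by
    intro p; simp
  rw [Finset.sum_congr rfl fun p _ => this p,
    Equiv.sum_comp σ (fun q : Fin n => if (q : ℕ) < (k : ℕ) then (1:ℤ) else 0),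
    count_lt n k (Fin.is_le k)]

lemma permSum_last_left {n : ℕ} (σ : Equiv.Perm (Fin n)) (k : Fin (n+1)) :
    distSum (PermMat σ) (Fin.last n) k = 0 := by
  rw [permSum]
  refine Finset.sum_eq_zero fun p _ => ?_
  have hp := p.isLt
  rw [if_neg]
  rintro ⟨h1, -⟩
  simp only [Fin.val_last] at h1
  omega

/-- `(Id^R)^Σ` is an annihilator for distance multiplication of
simple unit-Monge matrices. -/
theorem idR_annihilator {n : ℕ} (σ : Equiv.Perm (Fin n)) :
    (∀ i k : Fin (n+1),
        distProd (distSum (PermMat σ)) (distSum (IdR n)) i k = distSum (IdR n) i k) ∧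
    (∀ i k : Fin (n+1),
        distProd (distSum (IdR n)) (distSum (PermMat σ)) i k = distSum (IdR n) i k) := by
  constructor
  · intro i k
    rw [idRSum]
    apply le_antisymm
    · by_cases h : (k : ℤ) ≤ (n : ℤ) - (i : ℕ)
      · have h0 : distSum (PermMat σ) i 0 + distSum (IdR n) 0 k
            = min ((n : ℤ) - (i : ℕ)) (k : ℕ) := by
          rw [permSum_zero_right, idRSum]
          simp
          omega
        calc distProd (distSum (PermMat σ)) (distSum (IdR n)) i k
            ≤ _ := Finset.inf'_le _ (Finset.mem_univ (0 : Fin (n+1)))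
          _ = _ := h0
      · have h0 : distSum (PermMat σ) i (Fin.last n) + distSum (IdR n) (Fin.last n) k
            = min ((n : ℤ) - (i : ℕ)) (k : ℕ) := by
          rw [permSum_last_right, idRSum]
          simp [Fin.val_last]
          have := Fin.is_le k
          omega
        calc distProd (distSum (PermMat σ)) (distSum (IdR n)) i k
            ≤ _ := Finset.inf'_le _ (Finset.mem_univ (Fin.last n))
          _ = _ := h0
    · refine Finset.le_inf' _ _ fun j _ => ?_
      rw [idRSum]
      have h1 := permSum_nonneg σ i j
      have h2 := permSum_lb σ i j
      have hi := Fin.is_le i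
      have hj := Fin.is_le j
      have hk := Fin.is_le k
      omega
  · intro i k
    rw [idRSum]
    apply le_antisymm
    · by_cases h : (k : ℤ) ≤ (n : ℤ) - (i : ℕ)
      · have h0 : distSum (IdR n) i 0 + distSum (PermMat σ) 0 k
            = min ((n : ℤ) - (i : ℕ)) (k : ℕ) := by
          rw [permSum_zero_left, idRSum]
          simp
          have := Fin.is_le i
          omega
        calc distProd (distSum (IdR n)) (distSum (PermMat σ)) i k
            ≤ _ := Finset.inf'_le _ (Finset.mem_univ (0 : Fin (n+1)))
          _ = _ := h0
      · have h0 : distSum (IdR n) i (Fin.last n) + distSum (PermMat σ) (Fin.last n) k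
            = min ((n : ℤ) - (i : ℕ)) (k : ℕ) := by
          rw [permSum_last_left, idRSum]
          simp [Fin.val_last]
          have := Fin.is_le i
          omega
        calc distProd (distSum (IdR n)) (distSum (PermMat σ)) i k
            ≤ _ := Finset.inf'_le _ (Finset.mem_univ (Fin.last n))
          _ = _ := h0
    · refine Finset.le_inf' _ _ fun j _ => ?_
      rw [idRSum]
      have h1 := permSum_nonneg σ j k
      have h2 := permSum_lb σ j k
      have hi := Fin.is_le i
      have hj := Fin.is_le j
      have hk := Fin.is_le k
      omega
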